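/- Let a_0, a_∞ ∈ ℂ and ẽ_1 ∈ ℂ∖{0}. Define the maps g̃_{t1}², g̃_{1t}²: ℂ³ → ℂ³ by g̃_{t1}²(X_0,W_t,U_1) = (X_0, W_t − F̃_{W_t}, U_1 − F̃_{U_1} + X_0F̃_{W_t}) and g̃_{1t}²(X_0,W_t,U_1) = (X_0, W_t − F̃_{W_t} + X_0F̃_{U_1}, U_1 − F̃_{U_1}), where the partials are evaluated at (X_0,W_t,U_1;ã). Then: (1) F̃(g̃_{t1}²(X_0,W_t,U_1); ã) = F̃(X_0,W_t,U_1; ã) and F̃(g̃_{1t}²(X_0,W_t,U_1); ã) = F̃(X_0,W_t,U_1; ã) for all (X_0,W_t,U_1) ∈ ℂ³; (2) g̃_{1t}²(g̃_{t1}²(X_0,W_t,U_1)) = (X_0,W_t,U_1) whenever F̃(X_0,W_t,U_1;ã) = 0. -/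
import Mathlib


noncomputable section

/-- The Painlevé V Fricke polynomial `F̃(p; a0, ẽ1, a∞)`, on triples `p = (X0, Wt, U1)`. -/
def FVp (a0 te1 aI : ℂ) (p : ℂ × ℂ × ℂ) : ℂ :=
  p.1 * p.2.1 * p.2.2 + p.2.1 ^ 2 + p.2.2 ^ 2
    - (-te1) * p.1 - (aI - te1 * a0) * p.2.1 - (a0 - te1 * aI) * p.2.2
    + (1 - te1 * a0 * aI + te1 ^ 2)

/-- The PV monodromy map `g̃_{t1}² : (X0, Wt, U1) ↦ (X0, Wt − F̃_{Wt}, U1 − F̃_{U1} + X0F̃_{Wt})`. -/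
def gt1sq (a0 te1 aI : ℂ) (p : ℂ × ℂ × ℂ) : ℂ × ℂ × ℂ :=
  (p.1,
   p.2.1 - (p.1 * p.2.2 + 2 * p.2.1 - (aI - te1 * a0)),
   p.2.2 - (p.1 * p.2.1 + 2 * p.2.2 - (a0 - te1 * aI))
     + p.1 * (p.1 * p.2.2 + 2 * p.2.1 - (aI - te1 * a0)))

/-- The PV monodromy map `g̃_{1t}² : (X0, Wt, U1) ↦ (X0, Wt − F̃_{Wt} + X0F̃_{U1}, U1 − F̃_{U1})`. -/
def g1tsq (a0 te1 aI : ℂ) (p : ℂ × ℂ × ℂ) : ℂ × ℂ × ℂ :=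
  (p.1,
   p.2.1 - (p.1 * p.2.2 + 2 * p.2.1 - (aI - te1 * a0))
     + p.1 * (p.1 * p.2.1 + 2 * p.2.2 - (a0 - te1 * aI)),
   p.2.2 - (p.1 * p.2.1 + 2 * p.2.2 - (a0 - te1 * aI)))

/-- **PV monodromy maps preserve the Fricke polynomial and are mutually inverse on the
character variety:** (1) `F̃ ∘ g̃_{t1}² = F̃` and `F̃ ∘ g̃_{1t}² = F̃`;
(2) `g̃_{1t}² ∘ g̃_{t1}² = id` on `{F̃ = 0}`. -/
theorem PV_monodromy_preserves_fricke_and_inverse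
    (a0 aI : ℂ) (te1 : ℂ) (hte1 : te1 ≠ 0) :
    (∀ p : ℂ × ℂ × ℂ,
      FVp a0 te1 aI (gt1sq a0 te1 aI p) = FVp a0 te1 aI p ∧
      FVp a0 te1 aI (g1tsq a0 te1 aI p) = FVp a0 te1 aI p) ∧
    (∀ p : ℂ × ℂ × ℂ, FVp a0 te1 aI p = 0 → g1tsq a0 te1 aI (gt1sq a0 te1 aI p) = p) := by
  constructor
  · rintro ⟨x, w, u⟩
    constructor <;> simp only [FVp, gt1sq, g1tsq] <;> ring
  · rintro ⟨x, w, u⟩ h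
    simp only [g1tsq, gt1sq, Prod.mk.injEq]
    exact ⟨trivial, by ring, by ring⟩
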